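/- Under the hypotheses of the bucketing lemma, if n independent keys are drawn from an (s^α, s^{1-δ})-smooth distribution on [a,b] and the domain is split into at least n^{α/δ} equal-length intervals, then the expected number of keys falling in any fixed interval is O(1), i.e., bounded by a constant depending only on α, δ, β (not on n). -/

import Mathlib

open MeasureTheory Set

/-- If n independent keys are drawn from an (s^α, s^{1-δ})-smooth
distribution on [a,b] and the domain is split into at least n^{α/δ} equal-length
intervals, then the expected number of keys in any fixed interval is bounded by a
constant depending only on α, δ, β. -/
theorem expected_bucket_occupancy
    (μ : Measure ℝ) [IsProbabilityMeasure μ] (a b : ℝ) (hab : a < b)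
    (hsupp : μ (Set.Icc a b) = 1)
    (α δ : ℝ) (hα : 0 < α) (hδ : 0 < δ) (β : ℝ) (hβ : 0 < β)
    (hsmooth : ∀ c₁ c₂ c₃ : ℝ, a ≤ c₁ → c₁ < c₂ → c₂ ≤ c₃ → c₃ ≤ b → ∀ s : ℕ, 0 < s →
      μ (Set.Icc (c₂ - (c₃ - c₁) / (s : ℝ) ^ α) c₂ ∩ Set.Icc c₁ c₃) / μ (Set.Icc c₁ c₃)
        ≤ ENNReal.ofReal (β * (s : ℝ) ^ (1 - δ) / s)) :
    ∃ C > 0, ∀ n : ℕ, 2 ≤ n → ∀ k : ℕ, (n : ℝ) ^ (α / δ) ≤ k → ∀ j : ℕ, j < k →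
      ∀ (Ω : Type) (_ : MeasurableSpace Ω) (P : Measure Ω), IsProbabilityMeasure P →
        ∀ X : Fin n → Ω → ℝ, ProbabilityTheory.iIndepFun X P →
          (∀ i, Measure.map (X i) P = μ) →
          (∫ ω, (∑ i : Fin n,
              (Set.Icc (a + j * (b - a) / k) (a + (j + 1) * (b - a) / k)).indicator
                (fun _ => (1 : ℝ)) (X i ω)) ∂P) ≤ C := by
  refine ⟨β * 2 ^ δ, by positivity, ?_⟩
  intro n hn k hk j hj Ω mΩ P hP X hindep hmap
  have hn0 : (0:ℝ) < n := by positivity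
  have hn1 : (1:ℝ) ≤ n := by exact_mod_cast Nat.one_le_of_lt hn
  have hk0 : (0:ℝ) < k := lt_of_lt_of_le (Real.rpow_pos_of_pos hn0 _) hk
  have hba : (0:ℝ) < b - a := by linarith
  set lo := a + (j:ℝ) * (b - a) / k with hlo
  set hi := a + ((j:ℝ) + 1) * (b - a) / k with hhi
  set I := Set.Icc lo hi with hI
  -- the scale s
  set x : ℝ := (n:ℝ) ^ (1/δ) with hx
  have hx1 : (1:ℝ) ≤ x := Real.one_le_rpow hn1 (by positivity)
  set s : ℕ := ⌊x⌋₊ with hs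
  have hs1 : 1 ≤ s := Nat.le_floor (by exact_mod_cast hx1)
  have hs0 : 0 < s := hs1
  have hs0' : (0:ℝ) < s := by exact_mod_cast hs0
  have hsx : (s:ℝ) ≤ x := Nat.floor_le (by linarith)
  have hx2s : x ≤ 2 * s := by
    have := Nat.lt_floor_add_one x
    have hs1' : (1:ℝ) ≤ s := by exact_mod_cast hs1
    rw [← hs] at this
    linarith
  -- s^α ≤ k
  have hsk : (s:ℝ) ^ α ≤ k := by
    have h1 : (s:ℝ) ^ α ≤ x ^ α := Real.rpow_le_rpow (le_of_lt hs0') hsx (le_of_lt hα)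
    have h2 : x ^ α = (n:ℝ) ^ (α/δ) := by
      rw [hx, ← Real.rpow_mul (le_of_lt hn0)]
      congr 1
      field_simp
    linarith [hk, h1, h2.symm ▸ h1]
  -- bound μ I
  have hc12 : a < hi := by
    have : (0:ℝ) < ((j:ℝ)+1) * (b - a) / k := by positivity
    rw [hhi]; linarith
  have hjk : ((j:ℝ) + 1) ≤ k := by exact_mod_cast hj
  have hc23 : hi ≤ b := by
    rw [hhi]
    have h : ((j:ℝ)+1) * (b - a) / k ≤ b - a := by
      rw [div_le_iff₀ hk0]; nlinarith
    linarith
  have hsub : I ⊆ Set.Icc (hi - (b - a) / (s:ℝ) ^ α) hi ∩ Set.Icc a b := by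
    have hsα : (0:ℝ) < (s:ℝ) ^ α := Real.rpow_pos_of_pos hs0' _
    have hdiv : (b - a) / (k:ℝ) ≤ (b - a) / (s:ℝ) ^ α :=
      div_le_div_of_nonneg_left hba.le hsα hsk
    have hlohi : hi - lo = (b - a) / k := by rw [hhi, hlo]; ring
    have hloa : a ≤ lo := by
      have : (0:ℝ) ≤ (j:ℝ) * (b - a) / k := by positivity
      rw [hlo]; linarith
    intro y hy
    obtain ⟨hy1, hy2⟩ := hy
    have key : hi - (b - a) / (s:ℝ) ^ α ≤ y := by
      have h1 : hi - (b - a) / (s:ℝ) ^ α ≤ hi - (b - a) / (k:ℝ) := by linarith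
      have h2 : hi - (b - a) / (k:ℝ) = lo := by linarith
      exact le_trans (le_trans h1 (le_of_eq h2)) hy1
    exact ⟨⟨key, hy2⟩, ⟨by linarith, by linarith⟩⟩
  have hμI : μ I ≤ ENNReal.ofReal (β * 2 ^ δ / n) := by
    have hsm := hsmooth a hi b le_rfl hc12 hc23 le_rfl s hs0
    rw [hsupp, div_one] at hsm
    have hmono : μ I ≤ μ (Set.Icc (hi - (b - a) / (s:ℝ) ^ α) hi ∩ Set.Icc a b) :=
      measure_mono hsub
    refine le_trans (le_trans hmono hsm) (ENNReal.ofReal_le_ofReal ?_)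
    -- real inequality: β * s^(1-δ)/s ≤ β * 2^δ / n
    have hsd : (s:ℝ) ^ (1 - δ) / (s:ℝ) = (s:ℝ) ^ (-δ) := by
      have h := Real.rpow_add hs0' (-δ) 1
      rw [Real.rpow_one] at h
      have h2 : (1 - δ) = -δ + 1 := by ring
      rw [h2, h]
      field_simp
    have hA : (n:ℝ) / 2 ^ δ ≤ (s:ℝ) ^ δ := by
      have h1 : (x / 2) ^ δ ≤ (s:ℝ) ^ δ := by
        apply Real.rpow_le_rpow (by linarith) (by linarith) hδ.le
      have h2 : (x / 2) ^ δ = x ^ δ / (2:ℝ) ^ δ := Real.div_rpow (by linarith) (by norm_num) δ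
      have h3 : x ^ δ = (n:ℝ) := by
        rw [hx, ← Real.rpow_mul (le_of_lt hn0)]
        rw [one_div, inv_mul_cancel₀ (ne_of_gt hδ), Real.rpow_one]
      rw [h2, h3] at h1
      exact h1
    have hB : (s:ℝ) ^ (-δ) ≤ 2 ^ δ / n := by
      rw [Real.rpow_neg hs0'.le]
      have hsd0 : (0:ℝ) < (s:ℝ) ^ δ := Real.rpow_pos_of_pos hs0' _
      have hnd0 : (0:ℝ) < (n:ℝ) / 2 ^ δ := by positivity
      have := one_div_le_one_div_of_le hnd0 hA
      rw [one_div_div] at this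
      rw [inv_eq_one_div]
      exact this
    calc β * (s:ℝ) ^ (1 - δ) / (s:ℝ) = β * ((s:ℝ) ^ (1 - δ) / (s:ℝ)) := by ring
      _ = β * (s:ℝ) ^ (-δ) := by rw [hsd]
      _ ≤ β * (2 ^ δ / n) := by nlinarith [hB, hβ.le]
      _ = β * 2 ^ δ / n := by ring
  -- measurability / integrability
  have hmeasI : MeasurableSet I := measurableSet_Icc
  have hXm : ∀ i, AEMeasurable (X i) P := by
    intro i
    by_contra h
    have := Measure.map_of_not_aemeasurable h
    rw [hmap i] at this
    have : (1:ENNReal) = 0 := by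
      rw [← measure_univ (μ := μ), this]; simp
    simp at this
  have hintμ : Integrable (I.indicator (fun _ => (1:ℝ))) μ := by
    rw [integrable_indicator_iff hmeasI]
    exact integrableOn_const (measure_ne_top μ I)
  have hmeasind : StronglyMeasurable (I.indicator (fun _ => (1:ℝ))) :=
    (stronglyMeasurable_const.indicator hmeasI)
  have hint : ∀ i : Fin n, Integrable (fun ω => I.indicator (fun _ => (1:ℝ)) (X i ω)) P := by
    intro i
    rw [← hmap i] at hintμ
    exact (integrable_map_measure hmeasind.aestronglyMeasurable (hXm i)).1 hintμ
  have hval : ∀ i : Fin n,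
      (∫ ω, I.indicator (fun _ => (1:ℝ)) (X i ω) ∂P) = (μ I).toReal := by
    intro i
    rw [← integral_map (hXm i) hmeasind.aestronglyMeasurable, hmap i]
    exact integral_indicator_one hmeasI
  rw [integral_finset_sum _ (fun i _ => hint i)]
  have hsum : ∑ i : Fin n, (∫ ω, I.indicator (fun _ => (1:ℝ)) (X i ω) ∂P)
      = (n:ℝ) * (μ I).toReal := by
    calc ∑ i : Fin n, (∫ ω, I.indicator (fun _ => (1:ℝ)) (X i ω) ∂P)
        = ∑ _i : Fin n, (μ I).toReal := Finset.sum_congr rfl fun i _ => hval i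
      _ = (n:ℝ) * (μ I).toReal := by simp [Finset.sum_const, mul_comm]
  rw [hsum]
  have htoReal : (μ I).toReal ≤ β * 2 ^ δ / n :=
    ENNReal.toReal_le_of_le_ofReal (by positivity) hμI
  calc (n:ℝ) * (μ I).toReal ≤ (n:ℝ) * (β * 2 ^ δ / n) := by
        exact mul_le_mul_of_nonneg_left htoReal hn0.le
    _ = β * 2 ^ δ := by field_simp
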